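/- Let c ≥ 1 and n_1, n_2 ≥ 1 with n_1 ≤ n_2 and n_1 > 1. Let G be the graph formed by a clique S of size c completely joined to two disjoint cliques K_{n_1} and K_{n_2} (no edges between the two cliques), and let G' be similarly formed with cliques K_{n_1 - 1} and K_{n_2 + 1}. Then N(G') - N(G) = 2^{n_2} - 2^{n_1 - 1} > 0. -/
import Mathlib


open SimpleGraph

/-- Number of nonempty vertex subsets inducing a connected subgraph. -/
noncomputable def numConnSub {V : Type*} [Fintype V] (G : SimpleGraph V) : ℕ :=
  Set.ncard {S : Set V | S.Nonempty ∧ (G.induce S).Connected}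

/-- Number of vertex subsets containing `u` inducing a connected subgraph. -/
noncomputable def numConnSubAt {V : Type*} [Fintype V] (G : SimpleGraph V) (u : V) : ℕ :=
  Set.ncard {S : Set V | u ∈ S ∧ (G.induce S).Connected}

/-- The graph formed by a clique `S` of size `c` completely joined to two disjoint cliques
`K_{n₁}` and `K_{n₂}`, with no edges between the two cliques. -/
def threePart (c n₁ n₂ : ℕ) : SimpleGraph (Fin c ⊕ Fin n₁ ⊕ Fin n₂) :=
  SimpleGraph.fromRel (fun x y =>
    match x, y with
    | Sum.inr (Sum.inl _), Sum.inr (Sum.inr _) => False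
    | Sum.inr (Sum.inr _), Sum.inr (Sum.inl _) => False
    | _, _ => True)

namespace ThreePartAux

open Set

/-- A graph with a "hub" vertex adjacent to all other vertices of a set induces a connected
subgraph. -/
lemma connected_of_hub {V : Type*} (G : SimpleGraph V) (A : Set V) (v : V) (hv : v ∈ A)
    (h : ∀ x ∈ A, x ≠ v → G.Adj v x) : (G.induce A).Connected := by
  rw [connected_iff]
  have key : ∀ x : A, (G.induce A).Reachable x ⟨v, hv⟩ := by
    rintro ⟨x, hx⟩
    by_cases hxv : x = v
    · subst hxv; exact Reachable.refl _
    · exact (Adj.reachable (by simp [induce] at *; exact (h x hx hxv).symm))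
  exact ⟨fun x y => (key x).trans (key y).symm, ⟨⟨v, hv⟩⟩⟩

/-- Reachability preserves an edge-invariant. -/
lemma walk_invariant {V : Type*} {G : SimpleGraph V} {f : V → Bool}
    (h : ∀ u w : V, G.Adj u w → f u = f w) {u w : V} (hr : G.Reachable u w) : f u = f w := by
  obtain ⟨p⟩ := hr
  induction p with
  | nil => rfl
  | cons hadj _ ih => exact (h _ _ hadj).trans ih

variable {c a b : ℕ}

lemma adj_of_ne_of_inl (s : Fin c) (y : Fin c ⊕ Fin a ⊕ Fin b) (h : Sum.inl s ≠ y) :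
    (threePart c a b).Adj (Sum.inl s) y := by
  rw [threePart, fromRel_adj]
  exact ⟨h, Or.inl (by rcases y with _ | (_ | _) <;> trivial)⟩

lemma adj_left (i j : Fin a) (h : i ≠ j) :
    (threePart c a b).Adj (Sum.inr (Sum.inl i)) (Sum.inr (Sum.inl j)) := by
  rw [threePart, fromRel_adj]
  exact ⟨by simpa using h, Or.inl trivial⟩

lemma adj_right (i j : Fin b) (h : i ≠ j) :
    (threePart c a b).Adj (Sum.inr (Sum.inr i)) (Sum.inr (Sum.inr j)) := by
  rw [threePart, fromRel_adj]
  exact ⟨by simpa using h, Or.inl trivial⟩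

lemma not_adj_cross (i : Fin a) (j : Fin b) :
    ¬ (threePart c a b).Adj (Sum.inr (Sum.inl i)) (Sum.inr (Sum.inr j)) := by
  rw [threePart, fromRel_adj]
  rintro ⟨-, h | h⟩ <;> exact h

/-- The side function: `true` on the second clique. -/
def side : Fin c ⊕ Fin a ⊕ Fin b → Bool :=
  fun x => match x with
  | Sum.inr (Sum.inr _) => true
  | _ => false

/-- Characterization of the nonempty connected induced subgraphs of `threePart`. -/
lemma conn_iff (A : Set (Fin c ⊕ Fin a ⊕ Fin b)) :
    (A.Nonempty ∧ ((threePart c a b).induce A).Connected) ↔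
      (∃ s, Sum.inl s ∈ A) ∨
        (A.Nonempty ∧ A ⊆ Set.range (Sum.inr ∘ Sum.inl)) ∨
        (A.Nonempty ∧ A ⊆ Set.range (Sum.inr ∘ Sum.inr)) := by
  constructor
  · rintro ⟨hne, hconn⟩
    by_cases hS : ∃ s, Sum.inl s ∈ A
    · exact Or.inl hS
    push_neg at hS
    -- every element of A is of the form inr _
    by_cases hL : A ⊆ Set.range (Sum.inr ∘ Sum.inl)
    · exact Or.inr (Or.inl ⟨hne, hL⟩)
    right; right
    refine ⟨hne, ?_⟩
    -- get an element of A on the right side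
    obtain ⟨x, hxA, hxL⟩ := not_subset.mp hL
    have hx : ∃ j, x = Sum.inr (Sum.inr j) := by
      rcases x with s | i | j
      · exact absurd hxA (hS s)
      · exact absurd ⟨i, rfl⟩ hxL
      · exact ⟨j, rfl⟩
    obtain ⟨j, rfl⟩ := hx
    -- suppose some element is on the left side; contradiction via side invariant
    intro y hyA
    rcases y with s | i | j'
    · exact absurd hyA (hS s)
    · exfalso
      have hreach : ((threePart c a b).induce A).Reachable ⟨_, hyA⟩ ⟨_, hxA⟩ :=
        hconn.preconnected _ _
      have : side (c := c) (a := a) (b := b) (Sum.inr (Sum.inl i)) =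
          side (c := c) (a := a) (b := b) (Sum.inr (Sum.inr j)) := by
        refine walk_invariant (f := fun z : A => side z.1) ?_ hreach
        rintro ⟨u, hu⟩ ⟨w, hw⟩ hadj
        have hadj' : (threePart c a b).Adj u w := by simpa [induce] using hadj
        rcases u with s | i1 | j1
        · exact absurd hu (hS s)
        · rcases w with s | i2 | j2
          · exact absurd hw (hS s)
          · rfl
          · exact absurd hadj' (not_adj_cross i1 j2)
        · rcases w with s | i2 | j2
          · exact absurd hw (hS s)
          · exact absurd hadj'.symm (not_adj_cross i2 j1)
          · rfl
      simp [side] at this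
    · exact ⟨j', rfl⟩
  · rintro (⟨s, hs⟩ | ⟨hne, hL⟩ | ⟨hne, hR⟩)
    · refine ⟨⟨_, hs⟩, connected_of_hub _ A _ hs fun x hx hxne => ?_⟩
      exact adj_of_ne_of_inl s x (Ne.symm hxne)
    · obtain ⟨v, hv⟩ := hne
      refine ⟨⟨v, hv⟩, connected_of_hub _ A v hv fun x hx hxne => ?_⟩
      obtain ⟨i, rfl⟩ := hL hv
      obtain ⟨i', rfl⟩ := hL hx
      exact adj_left i i' (by rintro rfl; exact hxne rfl)
    · obtain ⟨v, hv⟩ := hne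
      refine ⟨⟨v, hv⟩, connected_of_hub _ A v hv fun x hx hxne => ?_⟩
      obtain ⟨i, rfl⟩ := hR hv
      obtain ⟨i', rfl⟩ := hR hx
      exact adj_right i i' (by rintro rfl; exact hxne rfl)

lemma card_set_eq {β : Type*} [Finite β] : Nat.card (Set β) = 2 ^ Nat.card β := by
  have e : Set β ≃ (β → Bool) :=
    (Equiv.refl (β → Prop)).trans (Equiv.arrowCongr (Equiv.refl β) Equiv.propEquivBool)
  rw [Nat.card_congr e, Nat.card_fun]
  simp [Nat.card_eq_fintype_card]

lemma ncard_powerset {α : Type*} [Finite α] (S : Set α) : (𝒫 S).ncard = 2 ^ S.ncard := by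
  rw [← Nat.card_coe_set_eq, Nat.card_congr (Equiv.Set.powerset S), card_set_eq,
    Nat.card_coe_set_eq]

/-- The number of connected induced subgraphs of `threePart c a b`. -/
lemma count (c a b : ℕ) :
    numConnSub (threePart c a b) + 2 ^ (a + b) + 2 = 2 ^ (c + a + b) + 2 ^ a + 2 ^ b := by
  classical
  set V := Fin c ⊕ Fin a ⊕ Fin b
  set L : Set V := Set.range (Sum.inr ∘ Sum.inl) with hLdef
  set R : Set V := Set.range (Sum.inr ∘ Sum.inr) with hRdef
  set F1 : Set (Set V) := {A | ∃ s, Sum.inl s ∈ A} with hF1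
  set F2 : Set (Set V) := {A | A.Nonempty ∧ A ⊆ L} with hF2
  set F3 : Set (Set V) := {A | A.Nonempty ∧ A ⊆ R} with hF3
  have hsplit : {A : Set V | A.Nonempty ∧ ((threePart c a b).induce A).Connected} =
      F1 ∪ (F2 ∪ F3) := by
    ext A
    simpa [F1, F2, F3, L, R, Set.union_assoc, or_assoc] using conn_iff A
  have hd23 : Disjoint F2 F3 := by
    rw [Set.disjoint_left]
    rintro A ⟨⟨v, hv⟩, hAL⟩ ⟨-, hAR⟩
    obtain ⟨i, rfl⟩ := hAL hv
    obtain ⟨j, hj⟩ := hAR hv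
    exact Sum.inr_ne_inl (Sum.inr_injective hj)
  have hd123 : Disjoint F1 (F2 ∪ F3) := by
    rw [Set.disjoint_left]
    rintro A ⟨s, hs⟩ (⟨-, hAL⟩ | ⟨-, hAR⟩)
    · obtain ⟨i, hi⟩ := hAL hs; simp at hi
    · obtain ⟨j, hj⟩ := hAR hs; simp at hj
  have hcount : numConnSub (threePart c a b) = F1.ncard + (F2.ncard + F3.ncard) := by
    rw [numConnSub, hsplit, Set.ncard_union_eq hd123, Set.ncard_union_eq hd23]
  -- cardinality of F1
  have hF1c : F1ᶜ = 𝒫 (Set.range (Sum.inr : Fin a ⊕ Fin b → V)) := by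
    ext A
    simp only [Set.mem_compl_iff, hF1, Set.mem_setOf_eq, not_exists, Set.mem_powerset_iff]
    constructor
    · intro h x hx
      rcases x with s | y
      · exact absurd hx (h s)
      · exact ⟨y, rfl⟩
    · intro h s hs
      obtain ⟨y, hy⟩ := h hs
      simp at hy
  have hrange : (Set.range (Sum.inr : Fin a ⊕ Fin b → V)).ncard = a + b := by
    rw [← Nat.card_coe_set_eq, Nat.card_range_of_injective Sum.inr_injective]
    simp [Nat.card_eq_fintype_card]
  have hVcard : Nat.card (Set V) = 2 ^ (c + a + b) := by
    rw [card_set_eq]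
    simp [V, Nat.card_eq_fintype_card, add_assoc]
  have hF1card : F1.ncard + 2 ^ (a + b) = 2 ^ (c + a + b) := by
    have := Set.ncard_add_ncard_compl F1
    rw [hF1c, ncard_powerset, hrange] at this
    rw [this, ← hVcard]
  -- cardinalities of F2 and F3
  have hLcard : L.ncard = a := by
    rw [hLdef, ← Nat.card_coe_set_eq,
      Nat.card_range_of_injective (Sum.inr_injective.comp Sum.inl_injective)]
    simp [Nat.card_eq_fintype_card]
  have hRcard : R.ncard = b := by
    rw [hRdef, ← Nat.card_coe_set_eq,
      Nat.card_range_of_injective (Sum.inr_injective.comp Sum.inr_injective)]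
    simp [Nat.card_eq_fintype_card]
  have hF2eq : F2 = 𝒫 L \ {∅} := by
    ext A
    simp [hF2, Set.nonempty_iff_ne_empty, and_comm]
  have hF3eq : F3 = 𝒫 R \ {∅} := by
    ext A
    simp [hF3, Set.nonempty_iff_ne_empty, and_comm]
  have hF2card : F2.ncard + 1 = 2 ^ a := by
    rw [hF2eq, Set.ncard_diff (by simp), ncard_powerset, hLcard, Set.ncard_singleton]
    have h1 : 1 ≤ 2 ^ a := Nat.one_le_two_pow
    omega
  have hF3card : F3.ncard + 1 = 2 ^ b := by
    rw [hF3eq, Set.ncard_diff (by simp), ncard_powerset, hRcard, Set.ncard_singleton]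
    have h1 : 1 ≤ 2 ^ b := Nat.one_le_two_pow
    omega
  omega

end ThreePartAux

/-- Moving one vertex from the smaller clique to the larger one strictly increases the
number of connected induced subgraphs: `N(G') - N(G) = 2^(n₂) - 2^(n₁-1) > 0`. -/
theorem numConnSub_threePart_shift (c n₁ n₂ : ℕ) (hc : 1 ≤ c) (h₁₂ : n₁ ≤ n₂)
    (h₁ : 1 < n₁) :
    numConnSub (threePart c (n₁ - 1) (n₂ + 1)) + 2 ^ (n₁ - 1) =
        numConnSub (threePart c n₁ n₂) + 2 ^ n₂ ∧
      numConnSub (threePart c n₁ n₂) < numConnSub (threePart c (n₁ - 1) (n₂ + 1)) := by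
  have e1 := ThreePartAux.count c n₁ n₂
  have e2 := ThreePartAux.count c (n₁ - 1) (n₂ + 1)
  have hsum : n₁ - 1 + (n₂ + 1) = n₁ + n₂ := by omega
  have hsum2 : c + (n₁ - 1) + (n₂ + 1) = c + n₁ + n₂ := by omega
  rw [hsum, hsum2] at e2
  have hp1 : 2 ^ n₁ = 2 * 2 ^ (n₁ - 1) := by
    conv_lhs => rw [show n₁ = (n₁ - 1) + 1 by omega]
    ring
  have hp2 : 2 ^ (n₂ + 1) = 2 * 2 ^ n₂ := by ring
  have hlt : 2 ^ (n₁ - 1) < 2 ^ n₂ := Nat.pow_lt_pow_right one_lt_two (by omega)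
  omega
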